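/- Let D be a delta-matroid on [n]. A point x ∈ ℤ^n lies in the polytope ½·(P(D) + [−1,1]^n) (the image of the Minkowski sum of P(D) and the cube [−1,1]^n under scaling by ½) if and only if x = e_S for some admissible set S that is independent in D. In particular, S ↦ e_S is a bijection between the independent sets of D and the lattice points of ½·(P(D) + [−1,1]^n). -/
import Mathlib


open Finset
open scoped symmDiff

/-- The rank-type function of a nonempty family `G` of subsets of `Fin n`, evaluated on an
admissible set `(Sp, Sn)`: `max_{F ∈ G} (|Sp ∩ F| + |Sn \\ F| − |Sn ∩ F| − |Sp \\ F|)`.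
(Junk value `0` when the family is empty.) -/
noncomputable def gFam {n : ℕ} (G : Finset (Finset (Fin n))) (Sp Sn : Finset (Fin n)) : ℤ :=
  if h : G.Nonempty then
    G.sup' h fun F => ((Sp ∩ F).card : ℤ) + ((Sn \ F).card : ℤ)
      - ((Sn ∩ F).card : ℤ) - ((Sp \ F).card : ℤ)
  else 0

/-- A delta-matroid on `[n]`: a nonempty family of subsets of `Fin n` (each `F` encoding the
size-`n` admissible set `(F, [n] \ F)`), satisfying the symmetric exchange axiom. -/
structure DeltaMatroid (n : ℕ) where
  feas : Finset (Finset (Fin n))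
  nonempty : feas.Nonempty
  exchange : ∀ F₁ ∈ feas, ∀ F₂ ∈ feas, ∀ x ∈ F₁ ∆ F₂, ∃ y ∈ F₁ ∆ F₂, F₁ ∆ {x, y} ∈ feas

/-- The rank function `g_D` of a delta-matroid, on admissible sets `(Sp, Sn)`. -/
noncomputable def DeltaMatroid.g {n : ℕ} (D : DeltaMatroid n) :
    Finset (Fin n) → Finset (Fin n) → ℤ :=
  gFam D.feas

open scoped Pointwise

/-- **Proposition (lattice points of `½(P(D) + [−1,1]^n)`).** A lattice point `x ∈ ℤ^n` lies in
`½ ⋅ (P(D) + [−1,1]^n)` if and only if `x = e_S` for some admissible set `S` independent in `D`. -/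
theorem deltaMatroid_lattice_points (n : ℕ) (D : DeltaMatroid n) (x : Fin n → ℤ) :
    ((fun i => (x i : ℝ)) ∈
        (2⁻¹ : ℝ) •
          (convexHull ℝ
              ((fun F : Finset (Fin n) => fun i => if i ∈ F then (1 : ℝ) else -1) '' ↑D.feas)
            + {y : Fin n → ℝ | ∀ i, y i ∈ Set.Icc (-1 : ℝ) 1}))
      ↔ ∃ Sp Sn : Finset (Fin n), Disjoint Sp Sn ∧
          (∃ F ∈ D.feas, Sp ⊆ F ∧ Disjoint Sn F) ∧
          ∀ i, (x i : ℝ) = if i ∈ Sp then 1 else if i ∈ Sn then -1 else 0 := by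
  constructor
  · rintro ⟨y, hy, hxy⟩
    rcases Set.mem_add.1 hy with ⟨p, hp, c, hc, rfl⟩
    rw [_root_.convexHull_eq] at hp
    obtain ⟨ι, t, w, z, hw0, hw1, hz, hcm⟩ := hp
    -- center of mass as a sum
    have hcm' : ∀ i, (∑ k ∈ t, w k * z k i) = p i := by
      intro i
      have := congrFun (t.centerMass_eq_of_sum_1 z hw1 ▸ hcm) i
      simpa [Finset.sum_apply] using this
    -- coordinates of the z's are ±1
    have hz1 : ∀ k ∈ t, ∀ i, z k i = 1 ∨ z k i = -1 := by
      intro k hk i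
      obtain ⟨F, _, hF⟩ := hz k hk
      rw [← hF]
      by_cases h : i ∈ F <;> simp [h]
    -- p coordinates in [-1,1]
    have hple : ∀ i, p i ≤ 1 := by
      intro i
      rw [← hcm' i, ← hw1]
      refine Finset.sum_le_sum fun k hk => ?_
      rcases hz1 k hk i with h | h <;> nlinarith [hw0 k hk]
    have hpge : ∀ i, -1 ≤ p i := by
      intro i
      rw [← hcm' i]
      calc (-1 : ℝ) = ∑ k ∈ t, -(w k) := by rw [Finset.sum_neg_distrib, hw1]
      _ ≤ _ := Finset.sum_le_sum fun k hk => by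
          rcases hz1 k hk i with h | h <;> nlinarith [hw0 k hk]
    -- relation 2 x i = p i + c i
    have hsum : ∀ i, p i + c i = 2 * (x i : ℝ) := by
      intro i
      have := congrFun hxy i
      simp only [Pi.smul_apply, Pi.add_apply, smul_eq_mul] at this
      linarith
    -- pick an index with positive weight
    have hne : ∃ j ∈ t, w j ≠ 0 := by
      by_contra h
      push_neg at h
      rw [Finset.sum_eq_zero h] at hw1
      norm_num at hw1
    obtain ⟨j, hj, hwj⟩ := hne
    have hwj : 0 < w j := lt_of_le_of_ne (hw0 j hj) (Ne.symm hwj)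
    obtain ⟨F, hF, hzF⟩ := hz j hj
    -- if z j i = -1 then p i < 1 ; if z j i = 1 then -1 < p i
    have key1 : ∀ i, p i = 1 → z j i = 1 := by
      intro i hpi
      rcases hz1 j hj i with h | h
      · exact h
      · exfalso
        have : (∑ k ∈ t, w k * z k i) < ∑ k ∈ t, w k := by
          refine Finset.sum_lt_sum (fun k hk => ?_) ⟨j, hj, ?_⟩
          · rcases hz1 k hk i with h' | h' <;> nlinarith [hw0 k hk]
          · nlinarith
        rw [hcm' i, hw1, hpi] at this
        exact lt_irrefl _ this
    have key2 : ∀ i, p i = -1 → z j i = -1 := by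
      intro i hpi
      rcases hz1 j hj i with h | h
      · exfalso
        have : (∑ k ∈ t, -(w k)) < ∑ k ∈ t, w k * z k i := by
          refine Finset.sum_lt_sum (fun k hk => ?_) ⟨j, hj, ?_⟩
          · rcases hz1 k hk i with h' | h' <;> nlinarith [hw0 k hk]
          · nlinarith
        rw [hcm' i, hpi, Finset.sum_neg_distrib, hw1] at this
        exact lt_irrefl _ this
      · exact h
    -- bounds on x
    have hxb : ∀ i, x i = 1 ∨ x i = 0 ∨ x i = -1 := by
      intro i
      have h1 := hple i
      have h2 := hpge i
      have h3 := (hc i).1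
      have h4 := (hc i).2
      have h5 := hsum i
      have hle : (x i : ℝ) ≤ 1 := by linarith
      have hge : (-1 : ℝ) ≤ (x i : ℝ) := by linarith
      have hle' : x i ≤ 1 := by exact_mod_cast hle
      have hge' : (-1 : ℤ) ≤ x i := by exact_mod_cast hge
      omega
    refine ⟨Finset.univ.filter (fun i => x i = 1), Finset.univ.filter (fun i => x i = -1),
      ?_, ⟨F, hF, ?_, ?_⟩, ?_⟩
    · simp [Finset.disjoint_filter]
      omega
    · intro i hi
      simp only [Finset.mem_filter, Finset.mem_univ, true_and] at hi
      have hpi : p i = 1 := by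
        have := hsum i; have := (hc i).2; have := hple i
        rw [hi] at *
        push_cast at *
        linarith
      have := key1 i hpi
      rw [← hzF] at this
      by_contra h
      simp [h] at this
      linarith
    · rw [Finset.disjoint_left]
      intro i hi hiF
      simp only [Finset.mem_filter, Finset.mem_univ, true_and] at hi
      have hpi : p i = -1 := by
        have := hsum i; have := (hc i).1; have := hpge i
        rw [hi] at *
        push_cast at *
        linarith
      have := key2 i hpi
      rw [← hzF] at this
      simp [hiF] at this
      linarith
    · intro i
      rcases hxb i with h | h | h <;>
        simp [h, Finset.mem_filter]
  · rintro ⟨Sp, Sn, hdisj, ⟨F, hF, hSpF, hSnF⟩, hx⟩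
    set eF : Fin n → ℝ := fun i => if i ∈ F then (1 : ℝ) else -1 with heF
    set c : Fin n → ℝ := fun i => 2 * (x i : ℝ) - eF i with hcdef
    refine ⟨eF + c, Set.add_mem_add (subset_convexHull ℝ _ ⟨F, hF, rfl⟩) ?_, ?_⟩
    · intro i
      have hxi := hx i
      simp only [hcdef, heF, Set.mem_Icc]
      by_cases h1 : i ∈ Sp
      · have hiF : i ∈ F := hSpF h1
        rw [hxi]
        constructor <;> simp [h1, hiF] <;> norm_num
      · by_cases h2 : i ∈ Sn
        · have hiF : i ∉ F := Finset.disjoint_left.1 hSnF h2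
          rw [hxi]
          constructor <;> simp [h1, h2, hiF] <;> norm_num
        · rw [hxi]
          by_cases hiF : i ∈ F <;> simp [h1, h2, hiF] <;> norm_num
    · funext i
      have hxi := hx i
      simp only [Pi.smul_apply, Pi.add_apply, smul_eq_mul, hcdef]
      ring
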